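/- Let $U_q$ be the set of $q$-element subsets of $[n]$, let $a_Z \geq 0$ for $Z \in U_q$, and define $\mu_\ell = \max_{Y \in U_\ell} \sum_{Z \in U_q, Z \supseteq Y} a_Z$. Let $w \geq 0$ be an integer, $\epsilon \geq 0$, and suppose $X_1, \dots, X_n$ are $\{0,1\}$-valued random variables such that for every $s \leq wq$ and all indices $i_1 < \dots < i_s$, $P(X_{i_1} = \cdots = X_{i_s} = 1) \leq (1+\epsilon) 2^{-s}$. Then $\mathbb{E}\left[ \left( \sum_{Z \in U_q} a_Z \prod_{v \in Z} X_v \right)^w \right] \leq (1+\epsilon) \left( \sum_{k=0}^q \binom{wq}{k} \mu_k 2^{k-q} \right)^w$. -/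

import Mathlib

open Finset MeasureTheory ProbabilityTheory

/-- The maximum, over `ℓ`-element subsets `Y` of `[n]`, of the sum of `a Z` over
`q`-element subsets `Z ⊇ Y` (taken as `0` if there are no `ℓ`-element subsets). -/
noncomputable def polyMu (n q : ℕ) (a : Finset (Fin n) → ℝ) (ℓ : ℕ) : ℝ :=
  WithBot.unbotD 0 (((Finset.powersetCard ℓ (Finset.univ : Finset (Fin n))).image fun Y =>
    ∑ Z ∈ (Finset.powersetCard q (Finset.univ : Finset (Fin n))).filter
      (fun Z => Y ⊆ Z), a Z).max)

lemma le_polyMu {n q : ℕ} {a : Finset (Fin n) → ℝ} {ℓ : ℕ} {Y : Finset (Fin n)}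
    (hY : Y ∈ Finset.powersetCard ℓ (Finset.univ : Finset (Fin n))) :
    ∑ Z ∈ (Finset.powersetCard q (Finset.univ : Finset (Fin n))).filter
      (fun Z => Y ⊆ Z), a Z ≤ polyMu n q a ℓ := by
  have h := Finset.le_max (Finset.mem_image_of_mem (fun Y =>
    ∑ Z ∈ (Finset.powersetCard q (Finset.univ : Finset (Fin n))).filter
      (fun Z => Y ⊆ Z), a Z) hY)
  rw [polyMu]
  rcases hm : (((Finset.powersetCard ℓ (Finset.univ : Finset (Fin n))).image fun Y =>
    ∑ Z ∈ (Finset.powersetCard q (Finset.univ : Finset (Fin n))).filter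
      (fun Z => Y ⊆ Z), a Z).max) with _ | m
  · rw [hm] at h; exact absurd h (WithBot.not_coe_le_bot _)
  · rw [hm] at h
    rw [hm]; exact (WithBot.coe_le_coe.mp h)

lemma polyMu_nonneg {n q : ℕ} {a : Finset (Fin n) → ℝ} (ha : ∀ Z, 0 ≤ a Z) (ℓ : ℕ) :
    0 ≤ polyMu n q a ℓ := by
  rcases (Finset.powersetCard ℓ (Finset.univ : Finset (Fin n))).eq_empty_or_nonempty with h | h
  · rw [polyMu, h]; simp
  · obtain ⟨Y, hY⟩ := h
    refine le_trans ?_ (le_polyMu hY)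
    exact Finset.sum_nonneg fun Z _ => ha Z

/-- Core single-step bound. -/
lemma step_bound {n q : ℕ} {a : Finset (Fin n) → ℝ} (ha : ∀ Z, 0 ≤ a Z)
    (w : ℕ) (U' : Finset (Fin n)) (hU' : U'.card ≤ w * q) :
    ∑ Z ∈ Finset.powersetCard q (Finset.univ : Finset (Fin n)),
      a Z * (2 : ℝ) ^ (((Z ∩ U').card : ℤ) - (q : ℤ)) ≤
    ∑ k ∈ Finset.range (q + 1),
      ((w * q).choose k : ℝ) * polyMu n q a k * (2 : ℝ) ^ ((k : ℤ) - (q : ℤ)) := by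
  classical
  set U := Finset.powersetCard q (Finset.univ : Finset (Fin n)) with hU
  set t := U'.powerset.filter (fun Y => Y.card ≤ q) with ht
  have hmaps : ∀ Z ∈ U, Z ∩ U' ∈ t := by
    intro Z hZ
    rw [Finset.mem_powersetCard] at hZ
    simp only [ht, Finset.mem_filter, Finset.mem_powerset]
    exact ⟨Finset.inter_subset_right, le_trans (Finset.card_le_card Finset.inter_subset_left)
      hZ.2.le⟩
  have hA : ∑ Z ∈ U, a Z * (2 : ℝ) ^ (((Z ∩ U').card : ℤ) - (q : ℤ)) =
      ∑ Y ∈ t, ∑ Z ∈ U.filter (fun Z => Z ∩ U' = Y),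
        a Z * (2 : ℝ) ^ ((Y.card : ℤ) - (q : ℤ)) := by
    rw [← Finset.sum_fiberwise_of_maps_to hmaps
      (fun Z => a Z * (2 : ℝ) ^ (((Z ∩ U').card : ℤ) - (q : ℤ)))]
    refine Finset.sum_congr rfl fun Y _ => Finset.sum_congr rfl fun Z hZ => ?_
    rw [Finset.mem_filter] at hZ
    rw [hZ.2]
  rw [hA]
  have hmaps2 : ∀ Y ∈ t, Y.card ∈ Finset.range (q + 1) := by
    intro Y hY
    rw [ht, Finset.mem_filter] at hY
    rw [Finset.mem_range]
    omega
  have hB : ∑ Y ∈ t, ∑ Z ∈ U.filter (fun Z => Z ∩ U' = Y),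
        a Z * (2 : ℝ) ^ ((Y.card : ℤ) - (q : ℤ)) =
      ∑ k ∈ Finset.range (q + 1), ∑ Y ∈ Finset.powersetCard k U',
        ∑ Z ∈ U.filter (fun Z => Z ∩ U' = Y), a Z * (2 : ℝ) ^ ((k : ℤ) - (q : ℤ)) := by
    rw [← Finset.sum_fiberwise_of_maps_to hmaps2 (fun Y => ∑ Z ∈ U.filter
      (fun Z => Z ∩ U' = Y), a Z * (2 : ℝ) ^ ((Y.card : ℤ) - (q : ℤ)))]
    refine Finset.sum_congr rfl fun k hk => ?_
    rw [Finset.mem_range] at hk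
    have hfe : t.filter (fun Y => Y.card = k) = Finset.powersetCard k U' := by
      rw [ht, Finset.filter_filter, Finset.powersetCard_eq_filter]
      refine Finset.filter_congr fun Y _ => ?_
      constructor
      · exact fun h => h.2
      · exact fun h => ⟨by omega, h⟩
    rw [hfe]
    refine Finset.sum_congr rfl fun Y hY => Finset.sum_congr rfl fun Z _ => ?_
    rw [(Finset.mem_powersetCard.mp hY).2]
  rw [hB]
  refine Finset.sum_le_sum fun k hk => ?_
  -- per k bound
  have hterm : ∀ Y ∈ Finset.powersetCard k U',
      ∑ Z ∈ U.filter (fun Z => Z ∩ U' = Y), a Z * (2 : ℝ) ^ ((k : ℤ) - (q : ℤ)) ≤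
      polyMu n q a k * (2 : ℝ) ^ ((k : ℤ) - (q : ℤ)) := by
    intro Y hY
    rw [← Finset.sum_mul]
    refine mul_le_mul_of_nonneg_right ?_ (by positivity)
    have h1 : ∑ Z ∈ U.filter (fun Z => Z ∩ U' = Y), a Z ≤
        ∑ Z ∈ U.filter (fun Z => Y ⊆ Z), a Z := by
      refine Finset.sum_le_sum_of_subset_of_nonneg ?_ (fun Z _ _ => ha Z)
      intro Z hZ
      rw [Finset.mem_filter] at hZ ⊢
      exact ⟨hZ.1, hZ.2 ▸ Finset.inter_subset_left⟩
    refine h1.trans (le_polyMu ?_)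
    rw [Finset.mem_powersetCard] at hY ⊢
    exact ⟨Finset.subset_univ Y, hY.2⟩
  calc ∑ Y ∈ Finset.powersetCard k U',
      ∑ Z ∈ U.filter (fun Z => Z ∩ U' = Y), a Z * (2 : ℝ) ^ ((k : ℤ) - (q : ℤ))
      ≤ ∑ _Y ∈ Finset.powersetCard k U',
        polyMu n q a k * (2 : ℝ) ^ ((k : ℤ) - (q : ℤ)) := Finset.sum_le_sum hterm
    _ = ((Finset.powersetCard k U').card : ℝ) *
        (polyMu n q a k * (2 : ℝ) ^ ((k : ℤ) - (q : ℤ))) := by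
        rw [Finset.sum_const, nsmul_eq_mul]
    _ ≤ ((w * q).choose k : ℝ) * (polyMu n q a k * (2 : ℝ) ^ ((k : ℤ) - (q : ℤ))) := by
        refine mul_le_mul_of_nonneg_right ?_
          (mul_nonneg (polyMu_nonneg ha k) (by positivity))
        rw [Finset.card_powersetCard]
        exact_mod_cast Nat.choose_le_choose k hU'
    _ = ((w * q).choose k : ℝ) * polyMu n q a k * (2 : ℝ) ^ ((k : ℤ) - (q : ℤ)) := by ring

/-- Proposition 4.2, part 2 (Fapp-prop2, part 2): approximate
`wq`-wise independence. -/
theorem stmt2 {Ω : Type*} [MeasurableSpace Ω] (μ : Measure Ω) [IsProbabilityMeasure μ]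
    (n q : ℕ) (a : Finset (Fin n) → ℝ) (ha : ∀ Z, 0 ≤ a Z)
    (w : ℕ) (ε : ℝ) (hε : 0 ≤ ε)
    (X : Fin n → Ω → ℝ) (hX01 : ∀ i ω, X i ω = 0 ∨ X i ω = 1)
    (happrox : ∀ (t : Finset (Fin n)), t.card ≤ w * q →
      μ {ω | ∀ i ∈ t, X i ω = 1} ≤
        ENNReal.ofReal ((1 + ε) * (2 : ℝ) ^ (-(t.card : ℤ)))) :
    ∫ ω, (∑ Z ∈ Finset.powersetCard q (Finset.univ : Finset (Fin n)),
        a Z * ∏ v ∈ Z, X v ω) ^ w ∂μ ≤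
    (1 + ε) * (∑ k ∈ Finset.range (q + 1),
      ((w * q).choose k : ℝ) * polyMu n q a k * (2 : ℝ) ^ ((k : ℤ) - (q : ℤ))) ^ w := by
  classical
  set M : ℝ := ∑ k ∈ Finset.range (q + 1),
      ((w * q).choose k : ℝ) * polyMu n q a k * (2 : ℝ) ^ ((k : ℤ) - (q : ℤ)) with hMdef
  let U : Finset (Finset (Fin n)) := Finset.powersetCard q (Finset.univ : Finset (Fin n))
  let I : Finset (Fin n) → Ω → ℝ := fun T ω => ∏ v ∈ T, X v ω
  let S : Ω → ℝ := fun ω => ∑ Z ∈ U, a Z * I Z ω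
  show ∫ ω, S ω ^ w ∂μ ≤ (1 + ε) * M ^ w
  have hXnn : ∀ i ω, 0 ≤ X i ω := by
    intro i ω; rcases hX01 i ω with h | h <;> rw [h] <;> norm_num
  have hInn : ∀ T ω, 0 ≤ I T ω := fun T ω => Finset.prod_nonneg fun v _ => hXnn v ω
  have hIunion : ∀ (T T' : Finset (Fin n)) ω, I T ω * I T' ω = I (T ∪ T') ω := by
    intro T T' ω
    by_cases h : ∀ v ∈ T ∪ T', X v ω = 1
    · have h1 : I T ω = 1 := Finset.prod_eq_one fun v hv => h v (Finset.mem_union_left _ hv)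
      have h2 : I T' ω = 1 := Finset.prod_eq_one fun v hv => h v (Finset.mem_union_right _ hv)
      have h3 : I (T ∪ T') ω = 1 := Finset.prod_eq_one h
      rw [h1, h2, h3]; ring
    · push_neg at h
      obtain ⟨v, hv, hv1⟩ := h
      have hv0 : X v ω = 0 := (hX01 v ω).resolve_right hv1
      have h3 : I (T ∪ T') ω = 0 := Finset.prod_eq_zero hv hv0
      rcases Finset.mem_union.mp hv with h | h
      · rw [show I T ω = 0 from Finset.prod_eq_zero h hv0, h3, zero_mul]
      · rw [show I T' ω = 0 from Finset.prod_eq_zero h hv0, h3, mul_zero]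
  have hM0 : 0 ≤ M := by
    rw [hMdef]
    refine Finset.sum_nonneg fun k _ => ?_
    exact mul_nonneg (mul_nonneg (Nat.cast_nonneg _) (polyMu_nonneg ha k)) (by positivity)
  -- the key induction
  have key : ∀ m, m ≤ w → ∃ c : Finset (Fin n) → ℝ, (∀ T, 0 ≤ c T) ∧
      (∀ T, c T ≠ 0 → T.card ≤ m * q) ∧
      (∀ ω, S ω ^ m = ∑ T : Finset (Fin n), c T * I T ω) ∧
      (∑ T : Finset (Fin n), c T * (2 : ℝ) ^ (-(T.card : ℤ)) ≤ M ^ m) := by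
    intro m
    induction m with
    | zero =>
      intro _
      refine ⟨fun T => if T = ∅ then 1 else 0, fun T => by dsimp only; split <;> norm_num,
        fun T hT => ?_, fun ω => ?_, ?_⟩
      · have hT0 : T = ∅ := by by_contra h; simp [h] at hT
        subst hT0; simp
      · rw [pow_zero, Finset.sum_eq_single (∅ : Finset (Fin n))
          (fun b _ hb => by simp [hb]) (fun h => absurd (Finset.mem_univ _) h)]
        simp [I]
      · rw [Finset.sum_eq_single (∅ : Finset (Fin n))
          (fun b _ hb => by simp [hb]) (fun h => absurd (Finset.mem_univ _) h)]
        simp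
    | succ m ih =>
      intro hm1
      obtain ⟨c, hc0, hccard, hcpt, hcb⟩ := ih (Nat.le_of_succ_le hm1)
      let c' : Finset (Fin n) → ℝ := fun T =>
        ∑ p ∈ ((Finset.univ ×ˢ U).filter (fun p => p.1 ∪ p.2 = T)), c p.1 * a p.2
      have hc'app : ∀ T, c' T =
          ∑ p ∈ ((Finset.univ ×ˢ U).filter (fun p => p.1 ∪ p.2 = T)), c p.1 * a p.2 :=
        fun T => rfl
      have hc'0 : ∀ T, 0 ≤ c' T := fun T =>
        Finset.sum_nonneg fun p _ => mul_nonneg (hc0 p.1) (ha p.2)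
      have hc'card : ∀ T, c' T ≠ 0 → T.card ≤ (m + 1) * q := by
        intro T hT
        obtain ⟨p, hp, hpne⟩ := Finset.exists_ne_zero_of_sum_ne_zero hT
        rw [Finset.mem_filter] at hp
        have hc1 : c p.1 ≠ 0 := fun h => hpne (by rw [h, zero_mul])
        have h1 : p.1.card ≤ m * q := hccard p.1 hc1
        have h2 : p.2.card = q := (Finset.mem_powersetCard.mp (Finset.mem_product.mp hp.1).2).2
        calc T.card = (p.1 ∪ p.2).card := by rw [hp.2]
          _ ≤ p.1.card + p.2.card := Finset.card_union_le _ _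
          _ ≤ (m + 1) * q := by rw [h2]; nlinarith
      have hfib : ∀ F : Finset (Fin n) × Finset (Fin n) → ℝ,
          ∑ T' : Finset (Fin n), ∑ Z ∈ U, F (T', Z) =
          ∑ T : Finset (Fin n),
            ∑ p ∈ ((Finset.univ ×ˢ U).filter (fun p => p.1 ∪ p.2 = T)), F p := by
        intro F
        rw [← Finset.sum_product' (f := fun T' Z => F (T', Z))]
        rw [← Finset.sum_fiberwise_of_maps_to (g := fun p : Finset (Fin n) × Finset (Fin n) =>
          p.1 ∪ p.2) (fun p _ => Finset.mem_univ (p.1 ∪ p.2)) F]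
      have hc'pt : ∀ ω, S ω ^ (m + 1) = ∑ T : Finset (Fin n), c' T * I T ω := by
        intro ω
        have e1 : S ω ^ (m + 1) =
            ∑ T' : Finset (Fin n), ∑ Z ∈ U, c T' * a Z * I (T' ∪ Z) ω := by
          rw [pow_succ, hcpt ω, show S ω = ∑ Z ∈ U, a Z * I Z ω from rfl,
            Finset.sum_mul_sum]
          exact Finset.sum_congr rfl fun T' _ => Finset.sum_congr rfl fun Z _ => by
            rw [← hIunion T' Z ω]; ring
        rw [e1, hfib (fun p => c p.1 * a p.2 * I (p.1 ∪ p.2) ω)]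
        refine Finset.sum_congr rfl fun T _ => ?_
        rw [hc'app, Finset.sum_mul]
        refine Finset.sum_congr rfl fun p hp => ?_
        rw [Finset.mem_filter] at hp
        rw [hp.2]
      have hc'b : ∑ T : Finset (Fin n), c' T * (2 : ℝ) ^ (-(T.card : ℤ)) ≤ M ^ (m + 1) := by
        have e2 : ∑ T : Finset (Fin n), c' T * (2 : ℝ) ^ (-(T.card : ℤ)) =
            ∑ T' : Finset (Fin n), ∑ Z ∈ U,
              c T' * a Z * (2 : ℝ) ^ (-(((T' ∪ Z).card : ℤ))) := by
          rw [hfib (fun p => c p.1 * a p.2 * (2 : ℝ) ^ (-(((p.1 ∪ p.2).card : ℤ))))]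
          refine Finset.sum_congr rfl fun T _ => ?_
          rw [hc'app, Finset.sum_mul]
          refine Finset.sum_congr rfl fun p hp => ?_
          rw [Finset.mem_filter] at hp
          rw [hp.2]
        rw [e2]
        have e3 : ∀ (T' Z : Finset (Fin n)), Z ∈ U →
            (2 : ℝ) ^ (-(((T' ∪ Z).card : ℤ))) =
            (2 : ℝ) ^ (-(T'.card : ℤ)) * (2 : ℝ) ^ (((Z ∩ T').card : ℤ) - (q : ℤ)) := by
          intro T' Z hZ
          have hq : Z.card = q := (Finset.mem_powersetCard.mp hZ).2
          have hcu : (T' ∪ Z).card + (T' ∩ Z).card = T'.card + Z.card :=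
            Finset.card_union_add_card_inter T' Z
          rw [← zpow_add₀ (two_ne_zero (α := ℝ))]
          congr 1
          rw [Finset.inter_comm]
          omega
        have e4 : ∀ T' : Finset (Fin n),
            ∑ Z ∈ U, c T' * a Z * (2 : ℝ) ^ (-(((T' ∪ Z).card : ℤ))) ≤
            c T' * (2 : ℝ) ^ (-(T'.card : ℤ)) * M := by
          intro T'
          by_cases hcT : c T' = 0
          · simp [hcT]
          · have hcard : T'.card ≤ w * q :=
              le_trans (hccard T' hcT)
                (Nat.mul_le_mul_right q (le_trans (Nat.le_succ m) hm1))
            calc ∑ Z ∈ U, c T' * a Z * (2 : ℝ) ^ (-(((T' ∪ Z).card : ℤ)))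
                = c T' * (2 : ℝ) ^ (-(T'.card : ℤ)) *
                  ∑ Z ∈ U, a Z * (2 : ℝ) ^ (((Z ∩ T').card : ℤ) - (q : ℤ)) := by
                  rw [Finset.mul_sum]
                  refine Finset.sum_congr rfl fun Z hZ => ?_
                  rw [e3 T' Z hZ]; ring
              _ ≤ c T' * (2 : ℝ) ^ (-(T'.card : ℤ)) * M := by
                  rw [hMdef]
                  exact mul_le_mul_of_nonneg_left (step_bound ha w T' hcard)
                    (mul_nonneg (hc0 T') (by positivity))
        calc ∑ T' : Finset (Fin n), ∑ Z ∈ U, c T' * a Z * (2 : ℝ) ^ (-(((T' ∪ Z).card : ℤ)))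
            ≤ ∑ T' : Finset (Fin n), c T' * (2 : ℝ) ^ (-(T'.card : ℤ)) * M :=
              Finset.sum_le_sum fun T' _ => e4 T'
          _ = (∑ T' : Finset (Fin n), c T' * (2 : ℝ) ^ (-(T'.card : ℤ))) * M := by
              rw [Finset.sum_mul]
          _ ≤ M ^ m * M := mul_le_mul_of_nonneg_right hcb hM0
          _ = M ^ (m + 1) := (pow_succ M m).symm
      exact ⟨c', hc'0, hc'card, hc'pt, hc'b⟩
  -- assemble
  have hRHS0 : (0 : ℝ) ≤ (1 + ε) * M ^ w := mul_nonneg (by linarith) (pow_nonneg hM0 w)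
  obtain ⟨c, hc0, hccard, hcpt, hcb⟩ := key w le_rfl
  by_cases hint : Integrable (fun ω => S ω ^ w) μ
  · have hS0 : ∀ ω, 0 ≤ S ω := fun ω =>
      Finset.sum_nonneg fun Z _ => mul_nonneg (ha Z) (hInn Z ω)
    have hSw0 : ∀ ω, 0 ≤ S ω ^ w := fun ω => pow_nonneg (hS0 ω) w
    rw [integral_eq_lintegral_of_nonneg_ae (Filter.Eventually.of_forall hSw0)
      hint.aestronglyMeasurable]
    have hA : ∀ T : Finset (Fin n), {ω | ∀ v ∈ T, X v ω = 1} ⊆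
        toMeasurable μ {ω | ∀ v ∈ T, X v ω = 1} := fun T => subset_toMeasurable μ _
    have hle : ∫⁻ ω, ENNReal.ofReal (S ω ^ w) ∂μ ≤ ENNReal.ofReal ((1 + ε) * M ^ w) := by
      have hpt : ∀ ω, ENNReal.ofReal (S ω ^ w) ≤
          ∑ T : Finset (Fin n), ENNReal.ofReal (c T) *
            (toMeasurable μ {ω' | ∀ v ∈ T, X v ω' = 1}).indicator 1 ω := by
        intro ω
        rw [hcpt ω, ENNReal.ofReal_sum_of_nonneg (fun T _ => mul_nonneg (hc0 T) (hInn T ω))]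
        refine Finset.sum_le_sum fun T _ => ?_
        by_cases hω : ω ∈ {ω' | ∀ v ∈ T, X v ω' = 1}
        · have h1 : I T ω = 1 := Finset.prod_eq_one fun v hv => hω v hv
          rw [h1, mul_one, ENNReal.ofReal, Set.indicator_of_mem (hA T hω), Pi.one_apply,
            mul_one]
        · have h0 : I T ω = 0 := by
            simp only [Set.mem_setOf_eq] at hω; push_neg at hω
            obtain ⟨v, hv, hv1⟩ := hω
            exact Finset.prod_eq_zero hv ((hX01 v ω).resolve_right hv1)
          rw [h0, mul_zero, ENNReal.ofReal_zero]
          exact zero_le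
      calc ∫⁻ ω, ENNReal.ofReal (S ω ^ w) ∂μ
          ≤ ∫⁻ ω, ∑ T : Finset (Fin n), ENNReal.ofReal (c T) *
              (toMeasurable μ {ω' | ∀ v ∈ T, X v ω' = 1}).indicator 1 ω ∂μ :=
            lintegral_mono hpt
        _ = ∑ T : Finset (Fin n), ENNReal.ofReal (c T) * μ {ω' | ∀ v ∈ T, X v ω' = 1} := by
            rw [lintegral_finset_sum (f := fun (T : Finset (Fin n)) (ω : Ω) =>
              ENNReal.ofReal (c T) *
                (toMeasurable μ {ω' | ∀ v ∈ T, X v ω' = 1}).indicator 1 ω) _ (fun T _ =>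
              (measurable_const.indicator (measurableSet_toMeasurable μ _)).const_mul _)]
            refine Finset.sum_congr rfl fun T _ => ?_
            rw [lintegral_const_mul (f := fun ω =>
                (toMeasurable μ {ω' | ∀ v ∈ T, X v ω' = 1}).indicator 1 ω) _
              (measurable_const.indicator (measurableSet_toMeasurable μ _)),
              lintegral_indicator_one (measurableSet_toMeasurable μ _), measure_toMeasurable]
        _ ≤ ∑ T : Finset (Fin n), ENNReal.ofReal (c T) *
              ENNReal.ofReal ((1 + ε) * (2 : ℝ) ^ (-(T.card : ℤ))) := by
            refine Finset.sum_le_sum fun T _ => ?_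
            by_cases hcT : c T = 0
            · simp [hcT]
            · exact mul_le_mul_right (happrox T (hccard T hcT)) _
        _ = ENNReal.ofReal (∑ T : Finset (Fin n),
              c T * ((1 + ε) * (2 : ℝ) ^ (-(T.card : ℤ)))) := by
            rw [ENNReal.ofReal_sum_of_nonneg (fun T _ => mul_nonneg (hc0 T)
              (mul_nonneg (by linarith) (by positivity)))]
            exact Finset.sum_congr rfl fun T _ => (ENNReal.ofReal_mul (hc0 T)).symm
        _ ≤ ENNReal.ofReal ((1 + ε) * M ^ w) := by
            refine ENNReal.ofReal_le_ofReal ?_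
            have e : ∑ T : Finset (Fin n), c T * ((1 + ε) * (2 : ℝ) ^ (-(T.card : ℤ))) =
                (1 + ε) * ∑ T : Finset (Fin n), c T * (2 : ℝ) ^ (-(T.card : ℤ)) := by
              rw [Finset.mul_sum]
              exact Finset.sum_congr rfl fun T _ => by ring
            rw [e]
            exact mul_le_mul_of_nonneg_left hcb (by linarith)
    calc (∫⁻ ω, ENNReal.ofReal (S ω ^ w) ∂μ).toReal
        ≤ (ENNReal.ofReal ((1 + ε) * M ^ w)).toReal :=
          ENNReal.toReal_mono ENNReal.ofReal_ne_top hle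
      _ = (1 + ε) * M ^ w := ENNReal.toReal_ofReal hRHS0
  · rw [integral_undef hint]
    exact hRHS0
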